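/- arXiv:1909.08507 — 2 statements merged into one kernel-verified Lean document; each statement's English description precedes it below -/
import Mathlib

section
/- Let X be a finite pure simplicial complex of dimension at least 2, G a group, and φ ∈ C¹(X;G). Let S be a finite nonempty set with a probability distribution μ, and suppose that for each s ∈ S we are given ψ_s ∈ C⁰(X;G) and, for each edge e ∈ X(1), a subcomplex Y_s(e) of X, such that whenever (ψ_s.φ)(u,v) ≠ 1 for an edge e={u,v}, there exists a 2-simplex τ of Y_s(e) with d₁φ(τ) ≠ 1. For a 2-simplex τ ∈ X(2) define δ_s(τ) = Σ_{e∈X(1) : τ∈Y_s(e)} c_X(e)/c_X(τ) and δ(τ) = Σ_{s∈S} μ(s)·δ_s(τ). Then ‖φ‖_csy ≤ (max_{τ∈X(2)} δ(τ)) · ‖d₁φ‖. -/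
open Finset

variable {V : Type*} [DecidableEq V]

/-- A finite abstract simplicial complex on vertex type `V`. -/
structure SComplex (V : Type*) [DecidableEq V] where
  faces : Finset (Finset V)
  nonempty_of_mem : ∀ σ ∈ faces, σ.Nonempty
  down_closed : ∀ σ ∈ faces, ∀ τ ⊆ σ, τ.Nonempty → τ ∈ faces

namespace SComplex

/-- The set `X(k)` of `k`-dimensional simplices (cardinality `k+1`). -/
def simps (X : SComplex V) (k : ℕ) : Finset (Finset V) :=
  X.faces.filter fun σ => σ.card = k + 1

/-- The number of vertices of a top-dimensional face. -/
def rank (X : SComplex V) : ℕ := X.faces.sup Finset.card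

/-- The weight `c_X(σ)`. -/
noncomputable def weight (X : SComplex V) (σ : Finset V) : ℝ :=
  (((X.simps (X.rank - 1)).filter fun τ => σ ⊆ τ).card : ℝ) /
    ((X.rank.choose σ.card) * ((X.simps (X.rank - 1)).card))

/-- `X` is pure of dimension `n-1` : every face is contained in a face with `n` vertices. -/
def IsPureOfRank (X : SComplex V) (n : ℕ) : Prop :=
  X.faces.Nonempty ∧ ∀ σ ∈ X.faces, ∃ τ ∈ X.faces, σ ⊆ τ ∧ τ.card = n

/-- The link `lk(X,σ)`. -/
def lk (X : SComplex V) (σ : Finset V) : SComplex V where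
  faces := X.faces.filter fun η => η ∪ σ ∈ X.faces ∧ Disjoint η σ
  nonempty_of_mem := fun η hη => X.nonempty_of_mem η (mem_filter.mp hη).1
  down_closed := by
    intro η hη τ hτη hτ
    rw [mem_filter] at hη ⊢
    refine ⟨X.down_closed η hη.1 τ hτη hτ,
      X.down_closed (η ∪ σ) hη.2.1 (τ ∪ σ) (union_subset_union_left hτη) ?_,
      hη.2.2.mono_left hτη⟩
    exact hτ.mono subset_union_left

/-- The star `st(X,σ)`. -/
def star (X : SComplex V) (σ : Finset V) : Finset (Finset V) :=
  X.faces.filter fun τ => τ ∪ σ ∈ X.faces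

/-- The vertices of `X`. -/
def verts (X : SComplex V) [Fintype V] : Finset V :=
  Finset.univ.filter fun v => ({v} : Finset V) ∈ X.faces

end SComplex
section Cochains

variable {G : Type*} [Group G]

/-- `φ ∈ C¹(X;G)`: an antisymmetric `G`-valued function on ordered pairs. -/
def IsCochain (G : Type*) [Group G] (φ : V → V → G) : Prop :=
  ∀ u v : V, φ u v = (φ v u)⁻¹

/-- The coboundary `d₁φ(u,v,w) = φ(u,v)φ(v,w)φ(w,u)`. -/
def d1 (φ : V → V → G) (u v w : V) : G := φ u v * φ v w * φ w u

/-- `φ ∈ Z¹(X;G)`: a cochain all of whose triangle equations hold. -/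
def IsCocycle (X : SComplex V) (φ : V → V → G) : Prop :=
  IsCochain G φ ∧ ∀ u v w : V, ({u, v, w} : Finset V) ∈ X.simps 2 → d1 φ u v w = 1

open Classical in
/-- The norm `‖φ‖`: total weight of the support of `φ`. -/
noncomputable def norm1 (X : SComplex V) (φ : V → V → G) : ℝ :=
  ∑ e ∈ (X.simps 1).filter (fun e => ∃ u v : V, e = {u, v} ∧ φ u v ≠ 1), X.weight e

open Classical in
/-- The norm `‖d₁φ‖`: total weight of the 2-simplices whose equation is violated. -/
noncomputable def normD1 (X : SComplex V) (φ : V → V → G) : ℝ :=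
  ∑ τ ∈ (X.simps 2).filter (fun τ => ∃ u v w : V, τ = {u, v, w} ∧ d1 φ u v w ≠ 1), X.weight τ

/-- `dist(φ,ψ) = ‖φψ⁻¹‖`. -/
noncomputable def dist1 (X : SComplex V) (φ ψ : V → V → G) : ℝ :=
  norm1 X (fun u v => φ u v * (ψ u v)⁻¹)

/-- The cosystolic norm `‖φ‖_csy`: the distance from `φ` to `Z¹(X;G)`. -/
noncomputable def csyNorm (X : SComplex V) (φ : V → V → G) : ℝ :=
  sInf {d : ℝ | ∃ ψ : V → V → G, IsCocycle X ψ ∧ d = dist1 X φ ψ}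

/-- The cosystolic expansion `h₁(X;G)`. -/
noncomputable def h1 (X : SComplex V) (G : Type*) [Group G] : ℝ :=
  sInf {r : ℝ | ∃ φ : V → V → G, IsCochain G φ ∧ ¬ IsCocycle X φ ∧
    r = normD1 X φ / csyNorm X φ}

end Cochains

section Fix

variable (G : Type*) [Group G] (S : Type*) [Fintype S] [MulAction G S]

open Classical in
/-- `fix(g) = |{s ∈ S : g•s = s}|`. -/
noncomputable def fixCard (g : G) : ℕ :=
  (Finset.univ.filter fun s : S => g • s = s).card

/-- `Fix_G(S) = max_{g ≠ 1} fix(g)`. -/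
noncomputable def FixG : ℕ :=
  sSup {k : ℕ | ∃ g : G, g ≠ 1 ∧ fixCard G S g = k}

end Fix
section Ycomplex

variable {G : Type*} [Group G] {S : Type*} [Fintype S] [DecidableEq S] [MulAction G S]
variable [Fintype V]

open Classical in
/-- The complex `Y_φ` associated to a cochain `φ`, together with the projection
`Prod.fst : Y_φ → X`. -/
noncomputable def Ycomplex (X : SComplex V) (φ : V → V → G) (S : Type*)
    [Fintype S] [DecidableEq S] [MulAction G S] : SComplex (V × S) where
  faces := Finset.univ.filter fun σ : Finset (V × S) =>
    σ.image Prod.fst ∈ X.faces ∧ (σ.image Prod.fst).card = σ.card ∧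
    ∀ p ∈ σ, ∀ q ∈ σ, p.1 ≠ q.1 → p.2 = φ p.1 q.1 • q.2
  nonempty_of_mem := by
    intro σ hσ
    rw [Finset.mem_filter] at hσ
    exact Finset.image_nonempty.mp (X.nonempty_of_mem _ hσ.2.1)
  down_closed := by
    intro σ hσ τ hτσ hτ
    rw [Finset.mem_filter] at hσ ⊢
    obtain ⟨-, h1, h2, h3⟩ := hσ
    refine ⟨Finset.mem_univ _,
      X.down_closed _ h1 _ (Finset.image_subset_image hτσ) (Finset.image_nonempty.mpr hτ),
      ?_, fun p hp q hq => h3 p (hτσ hp) q (hτσ hq)⟩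
    exact Finset.card_image_iff.mpr ((Finset.card_image_iff.mp h2).mono hτσ)

end Ycomplex

section Deficiency

variable {W : Type*} [DecidableEq W] [Fintype W] [Fintype V]

open Classical in
/-- `D_f(ut)`: the edges in the link of `f(ut)` that are not covered by the image of the
link of `ut`. -/
noncomputable def Dset (Y : SComplex W) (X : SComplex V) (f : W → V) (ut : W) :
    Finset (Finset V) :=
  ((X.lk {f ut}).simps 1).filter fun e => ¬ ∃ η ∈ (Y.lk {ut}).faces, η.image f = e

/-- The local deficiency `μ_f(ut)`. -/
noncomputable def locDef (Y : SComplex W) (X : SComplex V) (f : W → V) (ut : W) : ℝ :=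
  ∑ e ∈ Dset Y X f ut, (X.lk {f ut}).weight e

open Classical in
/-- The deficiency `m_f(Y)` of a map `f : Y → X`. -/
noncomputable def deficiency (Y : SComplex W) (X : SComplex V) (f : W → V) : ℝ :=
  ∑ u ∈ X.verts, (X.weight {u} / ((Y.verts.filter fun w => f w = u).card : ℝ)) *
    ∑ ut ∈ Y.verts.filter (fun w => f w = u), locDef Y X f ut

end Deficiency
section MapOver

variable [Fintype V]

/-- An element of `M(X;G,S)`: a surjective simplicial `|S|`-to-`1` map onto `X` whose
vertex fibers are identified with `S` and whose edge fibers are matchings given by the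
action of elements of `G`. -/
structure MapOver (X : SComplex V) (G : Type*) (S : Type*) [Group G] [Fintype S]
    [DecidableEq S] [MulAction G S] [Fintype V] where
  Y : SComplex (V × S)
  simplicial : ∀ τ ∈ Y.faces, τ.image Prod.fst ∈ X.faces
  injOnFaces : ∀ τ ∈ Y.faces, (τ.image Prod.fst).card = τ.card
  surj : ∀ σ ∈ X.faces, ∃ τ ∈ Y.faces, τ.image Prod.fst = σ
  fiber : ∀ p : V × S, ({p} : Finset (V × S)) ∈ Y.faces ↔ ({p.1} : Finset V) ∈ X.faces
  edges : ∀ u v : V, ({u, v} : Finset V) ∈ X.simps 1 → ∃ g : G,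
    ∀ s t : S, (({(u, s), (v, t)} : Finset (V × S)) ∈ Y.faces ↔ s = g • t)

variable {G : Type*} [Group G] {S : Type*} [Fintype S] [DecidableEq S] [MulAction G S]

open Classical in
/-- The set of edges of `Y` lying over a given edge of the base. -/
noncomputable def edgeFiber (Y : SComplex (V × S)) (e : Finset V) :
    Finset (Finset (V × S)) :=
  (Y.simps 1).filter fun e' => e'.image Prod.fst = e

open Classical in
/-- The distance between two elements of `M(X;G,S)`: the weight of the set of edges of
`X` over which the two edge fibers differ. -/
noncomputable def mdist (X : SComplex V) (M₁ M₂ : MapOver X G S) : ℝ :=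
  ∑ e ∈ (X.simps 1).filter (fun e => edgeFiber M₁.Y e ≠ edgeFiber M₂.Y e), X.weight e

/-- The distance from an element of `M(X;G,S)` to the set `M₀(X;G,S)` of genuine covers. -/
noncomputable def distToCovers (X : SComplex V) (M : MapOver X G S) : ℝ :=
  sInf {d : ℝ | ∃ M' : MapOver X G S, deficiency M'.Y X Prod.fst = 0 ∧ d = mdist X M M'}

/-- The `(G,S)`-cover-stability `c(X;G,S)`. -/
noncomputable def coverStability (X : SComplex V) (G : Type*) (S : Type*) [Group G]
    [Fintype S] [DecidableEq S] [MulAction G S] : ℝ :=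
  sInf {r : ℝ | ∃ M : MapOver X G S, deficiency M.Y X Prod.fst ≠ 0 ∧
    r = deficiency M.Y X Prod.fst / distToCovers X M}

end MapOver
section Paths

/-- A (possibly closed) edge path in a complex: consecutive vertices span edges. -/
def IsEdgePath (K : SComplex V) (p : List V) : Prop :=
  (∀ v ∈ p, ({v} : Finset V) ∈ K.faces) ∧
    p.Chain' fun u v => ({u, v} : Finset V) ∈ K.faces

/-- Combinatorial homotopy of edge paths, generated by erasing repetitions and by
collapsing across simplices. -/
inductive Homotopic (K : SComplex V) : List V → List V → Prop
  | refl (p : List V) : Homotopic K p p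
  | symm {p q : List V} : Homotopic K p q → Homotopic K q p
  | trans {p q r : List V} : Homotopic K p q → Homotopic K q r → Homotopic K p r
  | collapse (p q : List V) (a b c : V) (h : ({a, b, c} : Finset V) ∈ K.faces) :
      Homotopic K (p ++ a :: b :: c :: q) (p ++ a :: c :: q)
  | dedup (p q : List V) (a : V) : Homotopic K (p ++ a :: a :: q) (p ++ a :: q)

/-- `K` is connected: any two vertices are joined by an edge path. -/
def SComplexConnected (K : SComplex V) : Prop :=
  ∀ u v : V, ({u} : Finset V) ∈ K.faces → ({v} : Finset V) ∈ K.faces →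
    ∃ p : List V, IsEdgePath K p ∧ p.head? = some u ∧ p.getLast? = some v

/-- `K` is simply connected: connected, and every closed edge path is null-homotopic. -/
def SimplyConnected (K : SComplex V) : Prop :=
  SComplexConnected K ∧
    ∀ (p : List V) (a : V), IsEdgePath K p → p.head? = some a → p.getLast? = some a →
      Homotopic K p [a]

end Paths

section OrderComplex

open Classical in
/-- The order complex of `L ∖ {⊥, ⊤}`: simplices are the nonempty chains avoiding
`⊥` and `⊤`. -/
noncomputable def orderComplex (L : Type*) [Lattice L] [BoundedOrder L] [Fintype L]
    [DecidableEq L] : SComplex L where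
  faces := Finset.univ.filter fun σ : Finset L =>
    σ.Nonempty ∧ (∀ x ∈ σ, x ≠ ⊥ ∧ x ≠ ⊤) ∧ ∀ x ∈ σ, ∀ y ∈ σ, x ≤ y ∨ y ≤ x
  nonempty_of_mem := fun σ hσ => (Finset.mem_filter.mp hσ).2.1
  down_closed := by
    intro σ hσ τ hτσ hτ
    rw [Finset.mem_filter] at hσ ⊢
    exact ⟨Finset.mem_univ _, hτ, fun x hx => hσ.2.2.1 x (hτσ hx),
      fun x hx y hy => hσ.2.2.2 x (hτσ hx) y (hτσ hy)⟩

end OrderComplex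
section Building

variable (F : Type*) [Field F] [Fintype F]

noncomputable instance : Fintype (Submodule F (Fin 4 → F)) := by
  have : Finite (Submodule F (Fin 4 → F)) :=
    Finite.of_injective (fun N => (N : Set (Fin 4 → F))) SetLike.coe_injective
  exact Fintype.ofFinite _

noncomputable instance : DecidableEq (Submodule F (Fin 4 → F)) := Classical.decEq _

/-- The spherical building `A₃(F_q)`: the order complex of the poset of nontrivial proper
linear subspaces of `F_q⁴`. -/
noncomputable def A3 : SComplex (Submodule F (Fin 4 → F)) :=
  orderComplex (Submodule F (Fin 4 → F))

end Building
section FixEdge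

variable {G : Type*} [Group G]

open Classical in
/-- The value `fix(d₁φ(u,v₁,v₂))` for an unordered edge `e = {v₁,v₂}` of the link of `u`
(well defined for cochains, since `fix` is invariant under inversion and conjugation). -/
noncomputable def fixEdge (S : Type*) [Fintype S] [MulAction G S] (φ : V → V → G)
    (u : V) (e : Finset V) : ℕ :=
  sSup {k : ℕ | ∃ v₁ ∈ e, ∃ v₂ ∈ e, v₁ ≠ v₂ ∧ k = fixCard G S (d1 φ u v₁ v₂)}

end FixEdge
open Classical in
/-- the chain of inequalities (4.2): if acting on `φ` by each `ψ_s` pushes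
the support of the result into subcomplexes `Y_s(e)` containing violated triangles, then
`‖φ‖_csy ≤ (max_τ δ(τ))·‖d₁φ‖`, where `δ(τ) = E_s[Σ_{e : τ ∈ Y_s(e)} c_X(e)/c_X(τ)]`. -/
theorem csyNorm_le_max_delta_mul_normD1
    {V : Type*} [DecidableEq V] {G : Type*} [Group G]
    {S : Type*} [Fintype S] [Nonempty S]
    (X : SComplex V) (n : ℕ) (hn : 3 ≤ n) (hpure : X.IsPureOfRank n)
    (φ : V → V → G) (hφ : IsCochain G φ)
    (μ : S → ℝ) (hμ0 : ∀ s, 0 ≤ μ s) (hμ1 : ∑ s : S, μ s = 1)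
    (ψ : S → V → G) (Y : S → Finset V → SComplex V)
    (hsub : ∀ s : S, ∀ e ∈ X.simps 1, (Y s e).faces ⊆ X.faces)
    (hcover : ∀ (s : S) (u v : V), ({u, v} : Finset V) ∈ X.simps 1 →
      ψ s u * φ u v * (ψ s v)⁻¹ ≠ 1 →
      ∃ a b c : V, ({a, b, c} : Finset V) ∈ (Y s {u, v}).simps 2 ∧ d1 φ a b c ≠ 1) :
    csyNorm X φ ≤
      sSup {r : ℝ | ∃ τ ∈ X.simps 2, r = ∑ s : S, μ s *
          ∑ e ∈ (X.simps 1).filter (fun e => τ ∈ (Y s e).faces),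
            X.weight e / X.weight τ} *
        normD1 X φ := by
  
  classical
  obtain ⟨hne, hpureface⟩ := hpure
  have hrank : X.rank = n := by
    apply le_antisymm
    · apply Finset.sup_le
      intro σ hσ
      obtain ⟨τ, hτ, hστ, hcard⟩ := hpureface σ hσ
      exact hcard ▸ Finset.card_le_card hστ
    · obtain ⟨σ, hσ⟩ := hne
      obtain ⟨τ, hτ, -, hcard⟩ := hpureface σ hσ
      exact hcard ▸ Finset.le_sup hτ
  have hwnn : ∀ σ : Finset V, 0 ≤ X.weight σ := fun σ =>
    div_nonneg (Nat.cast_nonneg _) (mul_nonneg (Nat.cast_nonneg _) (Nat.cast_nonneg _))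
  have hwpos : ∀ τ ∈ X.simps 2, 0 < X.weight τ := by
    intro τ hτ
    rw [SComplex.simps, Finset.mem_filter] at hτ
    obtain ⟨σ, hσ, hτσ, hcard⟩ := hpureface τ hτ.1
    have hσmem : σ ∈ X.simps (X.rank - 1) := by
      rw [SComplex.simps, Finset.mem_filter, hrank]
      exact ⟨hσ, by omega⟩
    apply div_pos
    · have hσ2 : σ ∈ (X.simps (X.rank - 1)).filter fun τ' => τ ⊆ τ' :=
        Finset.mem_filter.mpr ⟨hσmem, hτσ⟩
      exact_mod_cast Finset.card_pos.mpr ⟨σ, hσ2⟩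
    · apply mul_pos
      · rw [hrank, hτ.2]
        exact_mod_cast Nat.choose_pos hn
      · exact_mod_cast Finset.card_pos.mpr ⟨σ, hσmem⟩
  set χ : S → V → V → G := fun s u v => (ψ s u)⁻¹ * ψ s v with hχ
  have hcoc : ∀ s, IsCocycle X (χ s) := by
    intro s
    refine ⟨fun u v => by simp [hχ, mul_inv_rev], fun u v w _ => by simp [d1, hχ, mul_assoc]⟩
  set T : Finset (Finset V) :=
    (X.simps 2).filter (fun τ => ∃ u v w : V, τ = {u, v, w} ∧ d1 φ u v w ≠ 1) with hT
  have hnormD1 : normD1 X φ = ∑ τ ∈ T, X.weight τ := by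
    rw [normD1, hT]
  set E : S → Finset (Finset V) := fun s =>
    (X.simps 1).filter (fun e => ∃ u v : V, e = {u, v} ∧ φ u v * (χ s u v)⁻¹ ≠ 1) with hE
  have hdist : ∀ s, dist1 X φ (χ s) = ∑ e ∈ E s, X.weight e := by
    intro s
    rw [dist1, norm1, hE]
  have hbdd : BddBelow {d : ℝ | ∃ ψ' : V → V → G, IsCocycle X ψ' ∧ d = dist1 X φ ψ'} := by
    refine ⟨0, ?_⟩
    rintro d ⟨ψ', -, rfl⟩
    exact Finset.sum_nonneg fun e _ => hwnn e
  have hAs : ∀ s, csyNorm X φ ≤ dist1 X φ (χ s) := fun s =>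
    csInf_le hbdd ⟨χ s, hcoc s, rfl⟩
  have hkey : ∀ s : S, ∀ e ∈ E s, ∃ τ ∈ T, τ ∈ (Y s e).faces := by
    intro s e he
    rw [hE, Finset.mem_filter] at he
    obtain ⟨he1, u, v, rfl, hne'⟩ := he
    have h2 : ψ s u * φ u v * (ψ s v)⁻¹ ≠ 1 := by
      intro hcon
      apply hne'
      have hconj : φ u v * (χ s u v)⁻¹ =
          (ψ s u)⁻¹ * (ψ s u * φ u v * (ψ s v)⁻¹) * ψ s u := by
        simp [hχ, mul_inv_rev, mul_assoc]
      rw [hconj, hcon, mul_one, inv_mul_cancel]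
    obtain ⟨a, b, c, habc, hd⟩ := hcover s u v he1 h2
    rw [SComplex.simps, Finset.mem_filter] at habc
    refine ⟨{a, b, c}, ?_, habc.1⟩
    rw [hT, Finset.mem_filter]
    refine ⟨?_, a, b, c, rfl, hd⟩
    rw [SComplex.simps, Finset.mem_filter]
    exact ⟨hsub s _ he1 habc.1, habc.2⟩
  have hB : ∀ s : S, dist1 X φ (χ s) ≤ ∑ τ ∈ T,
      (∑ e ∈ (X.simps 1).filter (fun e => τ ∈ (Y s e).faces),
        X.weight e / X.weight τ) * X.weight τ := by
    intro s
    rw [hdist s]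
    have step1 : ∑ e ∈ E s, X.weight e ≤
        ∑ e ∈ E s, ∑ τ ∈ T.filter (fun τ => τ ∈ (Y s e).faces), X.weight e := by
      apply Finset.sum_le_sum
      intro e he
      obtain ⟨τ, hτT, hτY⟩ := hkey s e he
      have hmem : τ ∈ T.filter (fun τ => τ ∈ (Y s e).faces) :=
        Finset.mem_filter.mpr ⟨hτT, hτY⟩
      have hc : (1 : ℝ) ≤ (T.filter fun τ => τ ∈ (Y s e).faces).card := by
        exact_mod_cast Finset.card_pos.mpr ⟨τ, hmem⟩
      rw [Finset.sum_const, nsmul_eq_mul]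
      nlinarith [hwnn e]
    refine step1.trans ?_
    have swap : ∑ e ∈ E s, ∑ τ ∈ T.filter (fun τ => τ ∈ (Y s e).faces), X.weight e =
        ∑ τ ∈ T, ∑ e ∈ (E s).filter (fun e => τ ∈ (Y s e).faces), X.weight e := by
      simp only [Finset.sum_filter]
      exact Finset.sum_comm
    rw [swap]
    apply Finset.sum_le_sum
    intro τ hτT
    have hτ2 : τ ∈ X.simps 2 := Finset.mem_of_mem_filter τ (hT ▸ hτT)
    rw [← Finset.sum_div, div_mul_cancel₀ _ (ne_of_gt (hwpos τ hτ2))]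
    apply Finset.sum_le_sum_of_subset_of_nonneg
    · intro e he
      rw [Finset.mem_filter] at he ⊢
      exact ⟨Finset.mem_of_mem_filter e (hE ▸ he.1), he.2⟩
    · intro e _ _
      exact hwnn e
  set M : ℝ := sSup {r : ℝ | ∃ τ ∈ X.simps 2, r = ∑ s : S, μ s *
      ∑ e ∈ (X.simps 1).filter (fun e => τ ∈ (Y s e).faces),
        X.weight e / X.weight τ} with hM
  have hbddM : BddAbove {r : ℝ | ∃ τ ∈ X.simps 2, r = ∑ s : S, μ s *
      ∑ e ∈ (X.simps 1).filter (fun e => τ ∈ (Y s e).faces),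
        X.weight e / X.weight τ} := by
    have hfin : {r : ℝ | ∃ τ ∈ X.simps 2, r = ∑ s : S, μ s *
        ∑ e ∈ (X.simps 1).filter (fun e => τ ∈ (Y s e).faces),
          X.weight e / X.weight τ} =
        ↑((X.simps 2).image (fun τ => ∑ s : S, μ s *
          ∑ e ∈ (X.simps 1).filter (fun e => τ ∈ (Y s e).faces),
            X.weight e / X.weight τ)) := by
      ext r
      simp [eq_comm]
    rw [hfin]
    exact Finset.bddAbove _
  calc csyNorm X φ = ∑ s : S, μ s * csyNorm X φ := by
        rw [← Finset.sum_mul, hμ1, one_mul]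
    _ ≤ ∑ s : S, μ s * ∑ τ ∈ T,
        (∑ e ∈ (X.simps 1).filter (fun e => τ ∈ (Y s e).faces),
          X.weight e / X.weight τ) * X.weight τ :=
        Finset.sum_le_sum fun s _ =>
          mul_le_mul_of_nonneg_left ((hAs s).trans (hB s)) (hμ0 s)
    _ = ∑ τ ∈ T, (∑ s : S, μ s *
        ∑ e ∈ (X.simps 1).filter (fun e => τ ∈ (Y s e).faces),
          X.weight e / X.weight τ) * X.weight τ := by
        simp only [Finset.mul_sum, Finset.sum_mul, mul_assoc]
        exact Finset.sum_comm
    _ ≤ ∑ τ ∈ T, M * X.weight τ := by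
        apply Finset.sum_le_sum
        intro τ hτT
        have hτ2 : τ ∈ X.simps 2 := Finset.mem_of_mem_filter τ (hT ▸ hτT)
        exact mul_le_mul_of_nonneg_right (le_csSup hbddM ⟨τ, hτ2, rfl⟩) (hwnn τ)
    _ = M * normD1 X φ := by
        rw [← Finset.mul_sum, hnormD1]
end

section
/- Let X be a finite connected simplicial complex, let G be a group acting on the left on a finite nonempty set S, and let φ ∈ Z¹(X;G). Then the projection map f:Y_φ→X, f([u,s])=u, is a covering map, i.e., a surjective simplicial map such that for every vertex u of X and every ũ ∈ f⁻¹(u), f restricts to an isomorphism from the star of ũ in Y_φ onto the star of u in X. -/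
open Finset

variable {V : Type*} [DecidableEq V]

section Aux

variable {G : Type*} [Group G] {S : Type*} [Fintype S] [DecidableEq S] [MulAction G S]
variable [Fintype V]

/-- The canonical section over a base point. -/
noncomputable def Ysec (φ : V → V → G) (u : V) (s : S) (v : V) : V × S :=
  (v, if v = u then s else φ v u • s)

lemma Ysec_injective (φ : V → V → G) (u : V) (s : S) :
    Function.Injective (Ysec φ u s) := fun a b h => congrArg Prod.fst h

lemma Ysec_lift_mem (X : SComplex V) (φ : V → V → G) (hφ : IsCocycle X φ)
    {σ : Finset V} (hσ : σ ∈ X.faces) {u : V} (hu : u ∈ σ) (s : S) :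
    σ.image (Ysec φ u s) ∈ (Ycomplex X φ S).faces := by
  classical
  have himg : (σ.image (Ysec φ u s)).image Prod.fst = σ := by
    rw [Finset.image_image]
    have : Prod.fst ∘ Ysec φ u s = id := rfl
    rw [this, Finset.image_id]
  simp only [Ycomplex, Finset.mem_filter, Finset.mem_univ, true_and]
  refine ⟨by rw [himg]; exact hσ, ?_, ?_⟩
  · rw [himg, Finset.card_image_of_injective _ (Ysec_injective φ u s)]
  · rintro p hp q hq hne
    obtain ⟨v, hv, rfl⟩ := Finset.mem_image.mp hp
    obtain ⟨w, hw, rfl⟩ := Finset.mem_image.mp hq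
    simp only [Ysec] at hne ⊢
    by_cases hwu : w = u
    · subst hwu
      rw [if_neg hne, if_pos rfl]
    · by_cases hvu : v = u
      · subst hvu
        rw [if_pos rfl, if_neg hwu, ← mul_smul, hφ.1 v w, inv_mul_cancel, one_smul]
      · rw [if_neg hvu, if_neg hwu, ← mul_smul]
        have htri : ({v, w, u} : Finset V) ∈ X.simps 2 := by
          simp only [SComplex.simps, Finset.mem_filter]
          constructor
          · refine X.down_closed σ hσ _ ?_ ⟨v, by simp⟩
            intro x hx
            simp only [Finset.mem_insert, Finset.mem_singleton] at hx
            rcases hx with rfl | rfl | rfl <;> assumption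
          · exact Finset.card_eq_three.mpr ⟨v, w, u, hne, hvu, hwu, rfl⟩
        have hd : d1 φ v w u = 1 := hφ.2 v w u htri
        have heq : φ v w * φ w u = φ v u := by
          simp only [d1] at hd
          rw [hφ.1 v u]
          exact mul_eq_one_iff_eq_inv.mp hd
        rw [heq]

/-- Every member of the star of `{(u,s)}` is the canonical lift of its image. -/
lemma Ysec_star_eq (X : SComplex V) (φ : V → V → G)
    {u : V} {s : S} {τ : Finset (V × S)}
    (hτ : τ ∈ (Ycomplex X φ S).faces)
    (hτu : τ ∪ {(u, s)} ∈ (Ycomplex X φ S).faces) :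
    τ = (τ.image Prod.fst).image (Ysec φ u s) := by
  classical
  simp only [Ycomplex, Finset.mem_filter, Finset.mem_univ, true_and] at hτu
  obtain ⟨-, hcard, hcompat⟩ := hτu
  have hinj : Set.InjOn (Prod.fst : V × S → V) (τ ∪ {(u, s)} : Finset (V × S)) :=
    Finset.card_image_iff.mp hcard
  have key : ∀ p ∈ τ, Ysec φ u s p.1 = p := by
    intro p hp
    have hp' : p ∈ τ ∪ {(u, s)} := Finset.mem_union_left _ hp
    have hus : (u, s) ∈ τ ∪ {(u, s)} := Finset.mem_union_right _ (by simp)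
    by_cases hpu : p.1 = u
    · have : p = (u, s) := hinj hp' hus hpu
      subst this
      simp [Ysec]
    · have := hcompat p hp' (u, s) hus hpu
      simp only [Ysec, if_neg hpu]
      exact Prod.ext rfl this.symm
  apply Finset.Subset.antisymm
  · intro p hp
    exact Finset.mem_image.mpr ⟨p.1, Finset.mem_image_of_mem _ hp, key p hp⟩
  · intro q hq
    obtain ⟨v, hv, rfl⟩ := Finset.mem_image.mp hq
    obtain ⟨p, hp, rfl⟩ := Finset.mem_image.mp hv
    exact (key p hp) ▸ hp

end Aux

/-- cocycles give covers: if `φ ∈ Z¹(X;G)` then the projection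
`Y_φ → X` is a covering map: it is simplicial, surjective, and restricts to an
isomorphism from the star of each vertex of `Y_φ` onto the star of its image. -/
theorem Ycomplex_covering_of_cocycle
    {V : Type*} [Fintype V] [DecidableEq V]
    {G : Type*} [Group G] (S : Type*) [Fintype S] [DecidableEq S] [Nonempty S]
    [MulAction G S]
    (X : SComplex V) (hconn : SComplexConnected X)
    (φ : V → V → G) (hφ : IsCocycle X φ) :
    (∀ τ ∈ (Ycomplex X φ S).faces, τ.image Prod.fst ∈ X.faces) ∧
      (∀ σ ∈ X.faces, ∃ τ ∈ (Ycomplex X φ S).faces, τ.image Prod.fst = σ) ∧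
      ∀ (u : V) (s : S), ({(u, s)} : Finset (V × S)) ∈ (Ycomplex X φ S).faces →
        Set.BijOn (fun τ : Finset (V × S) => τ.image Prod.fst)
          ((Ycomplex X φ S).star {(u, s)} : Set (Finset (V × S)))
          (X.star {u} : Set (Finset V)) := by
  classical
  have hsimp : ∀ τ ∈ (Ycomplex X φ S).faces, τ.image Prod.fst ∈ X.faces := by
    intro τ hτ
    simp only [Ycomplex, Finset.mem_filter, Finset.mem_univ, true_and] at hτ
    exact hτ.1
  refine ⟨hsimp, ?_, ?_⟩
  · -- surjectivity
    intro σ hσ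
    obtain ⟨u₀, hu₀⟩ := X.nonempty_of_mem σ hσ
    obtain ⟨s⟩ := ‹Nonempty S›
    refine ⟨σ.image (Ysec φ u₀ s), Ysec_lift_mem X φ hφ hσ hu₀ s, ?_⟩
    rw [Finset.image_image]
    have : Prod.fst ∘ Ysec φ u₀ s = id := rfl
    rw [this, Finset.image_id]
  · -- star isomorphisms
    intro u s hus
    have husX : ({u} : Finset V) ∈ X.faces := by
      have := hsimp _ hus
      simpa using this
    constructor
    · -- MapsTo
      intro τ hτ
      simp only [Finset.coe_filter, SComplex.star, Set.mem_setOf_eq] at hτ ⊢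
      obtain ⟨hτY, hτuY⟩ := hτ
      refine ⟨hsimp _ hτY, ?_⟩
      have := hsimp _ hτuY
      rwa [Finset.image_union, Finset.image_singleton] at this
    constructor
    · -- InjOn
      intro τ₁ hτ₁ τ₂ hτ₂ h
      simp only [Finset.coe_filter, SComplex.star, Set.mem_setOf_eq] at hτ₁ hτ₂
      rw [Ysec_star_eq X φ hτ₁.1 hτ₁.2, Ysec_star_eq X φ hτ₂.1 hτ₂.2]
      exact congrArg (Finset.image (Ysec φ u s)) h
    · -- SurjOn
      intro σ hσ
      simp only [Finset.coe_filter, SComplex.star, Set.mem_setOf_eq] at hσ ⊢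
      obtain ⟨hσX, hσuX⟩ := hσ
      have huin : u ∈ σ ∪ {u} := Finset.mem_union_right _ (by simp)
      have hlift := Ysec_lift_mem (S := S) X φ hφ hσuX huin s
      have himg : ∀ ρ : Finset V, (ρ.image (Ysec φ u s)).image Prod.fst = ρ := by
        intro ρ
        rw [Finset.image_image]
        have : Prod.fst ∘ Ysec φ u s = id := rfl
        rw [this, Finset.image_id]
      have hdecomp : (σ ∪ {u}).image (Ysec φ u s)
          = σ.image (Ysec φ u s) ∪ {(u, s)} := by
        rw [Finset.image_union, Finset.image_singleton]
        congr 1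
        simp [Ysec]
      refine ⟨σ.image (Ysec φ u s), ⟨?_, ?_⟩, himg σ⟩
      · refine (Ycomplex X φ S).down_closed _ (hdecomp ▸ hlift) _
          Finset.subset_union_left ?_
        exact Finset.image_nonempty.mpr (X.nonempty_of_mem σ hσX)
      · exact hdecomp ▸ hlift
end
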